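/- Let Φ = Φ_NS be a density operator on H_N ⊗ H_S and Ψ = Ψ_NT a density operator on H_N ⊗ H_T. If there exists a positive (not necessarily completely positive) trace-preserving linear map E from operators on H_S to operators on H_T with Ψ = (id_N ⊗ E)(Φ), then for every k and all Hermitian operators M^1, …, M^k on H_N, the trivial-environment game values satisfy R(Ψ; M^1, …, M^k) ≤ R(Φ; M^1, …, M^k). -/

import Mathlib

open Matrix Kronecker BigOperators
open scoped ComplexOrder

/-- A density operator: positive semidefinite with trace 1. -/
def IsDensity {ι : Type} [Fintype ι] (A : Matrix ι ι ℂ) : Prop :=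
  A.PosSemidef ∧ A.trace = 1

/-- A POVM with `k` outcomes: positive semidefinite operators summing to the identity. -/
def IsPOVM {ι : Type} [Fintype ι] [DecidableEq ι] {k : ℕ}
    (D : Fin k → Matrix ι ι ℂ) : Prop :=
  (∀ i, (D i).PosSemidef) ∧ ∑ i, D i = 1

/-- Value of the trivial-environment game given by Hermitian payoff observables
`M^1, …, M^k` on `H_N`, over the information structure `Φ` on `H_N ⊗ H_S`:
the maximum over POVMs `(D^1, …, D^k)` on `H_S` of `Σ_i tr(Φ·(M^i ⊗ D^i))`. -/
noncomputable def RvalTriv {n s k : ℕ}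
    (Φ : Matrix (Fin n × Fin s) (Fin n × Fin s) ℂ)
    (M : Fin k → Matrix (Fin n) (Fin n) ℂ) : ℝ :=
  sSup {r : ℝ | ∃ D : Fin k → Matrix (Fin s) (Fin s) ℂ,
    IsPOVM D ∧ r = ∑ i, ((Φ * (M i ⊗ₖ D i)).trace).re}

/-- `id_N ⊗ E`, the map on operators on `ℂ^m ⊗ H_S` determined by
`(id ⊗ E)(x ⊗ y) = x ⊗ E(y)`, defined blockwise. -/
def matLift {s t : ℕ} (m : ℕ)
    (E : Matrix (Fin s) (Fin s) ℂ →ₗ[ℂ] Matrix (Fin t) (Fin t) ℂ)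
    (X : Matrix (Fin m × Fin s) (Fin m × Fin s) ℂ) :
    Matrix (Fin m × Fin t) (Fin m × Fin t) ℂ :=
  Matrix.of fun p q => E (Matrix.of fun σ σ' => X (p.1, σ) (q.1, σ')) p.2 q.2

/-- `E` is trace preserving. -/
def TracePreserving {s t : ℕ}
    (E : Matrix (Fin s) (Fin s) ℂ →ₗ[ℂ] Matrix (Fin t) (Fin t) ℂ) : Prop :=
  ∀ X, (E X).trace = X.trace

/-- `E` is positive: it maps positive semidefinite operators to positive
semidefinite operators. -/
def PositiveMap {s t : ℕ}
    (E : Matrix (Fin s) (Fin s) ℂ →ₗ[ℂ] Matrix (Fin t) (Fin t) ℂ) : Prop :=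
  ∀ X : Matrix (Fin s) (Fin s) ℂ, X.PosSemidef → (E X).PosSemidef


lemma psd_of_form {ι : Type} [Fintype ι] [DecidableEq ι]
    (M : Matrix ι ι ℂ) (h : ∀ x : ι → ℂ, 0 ≤ star x ⬝ᵥ M *ᵥ x) : M.PosSemidef := by
  have key : ∀ x y : ι → ℂ, star y ⬝ᵥ M *ᵥ x = (starRingEnd ℂ) (star x ⬝ᵥ M *ᵥ y) := by
    intro x y
    have him : ∀ z : ι → ℂ, (star z ⬝ᵥ M *ᵥ z).im = 0 := by
      intro z
      have h0 := h z
      rw [Complex.le_def] at h0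
      simpa using h0.2.symm
    have e1 : ∀ u v : ι → ℂ, star (u + v) ⬝ᵥ M *ᵥ (u + v)
        = star u ⬝ᵥ M *ᵥ u + (star u ⬝ᵥ M *ᵥ v + (star v ⬝ᵥ M *ᵥ u + star v ⬝ᵥ M *ᵥ v)) := by
      intro u v
      simp [star_add, add_dotProduct, Matrix.mulVec_add, dotProduct_add]
      ring
    have h1 := him (x + y)
    rw [e1 x y] at h1
    have h2 := him (x + Complex.I • y)
    rw [e1 x (Complex.I • y)] at h2
    have hs1 : star x ⬝ᵥ M *ᵥ (Complex.I • y) = Complex.I * (star x ⬝ᵥ M *ᵥ y) := by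
      simp [Matrix.mulVec_smul, dotProduct_smul, smul_eq_mul]
    have hs2 : star (Complex.I • y) ⬝ᵥ M *ᵥ x = -Complex.I * (star y ⬝ᵥ M *ᵥ x) := by
      simp [star_smul, smul_dotProduct, smul_eq_mul, Complex.conj_I]
    have hs3 : star (Complex.I • y) ⬝ᵥ M *ᵥ (Complex.I • y) = star y ⬝ᵥ M *ᵥ y := by
      simp [star_smul, smul_dotProduct, dotProduct_smul, Matrix.mulVec_smul, smul_eq_mul,
        Complex.conj_I]
      ring_nf
      rw [Complex.I_sq]
      ring
    rw [hs1, hs2, hs3] at h2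
    set u := star x ⬝ᵥ M *ᵥ y with hu
    set v := star y ⬝ᵥ M *ᵥ x with hv
    have hx := him x; have hy := him y
    apply Complex.ext
    · simp only [Complex.add_re, Complex.add_im, Complex.mul_im, Complex.neg_re, Complex.neg_im,
        Complex.I_re, Complex.I_im] at h1 h2 ⊢
      simp only [Complex.conj_re]
      nlinarith [h2]
    · simp only [Complex.add_im, Complex.mul_im, Complex.neg_re, Complex.neg_im,
        Complex.I_re, Complex.I_im] at h1 h2 ⊢
      simp only [Complex.conj_im]
      nlinarith [h1, hx, hy]
  refine Matrix.PosSemidef.of_dotProduct_mulVec_nonneg ?_ h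
  ext a b
  have hk := key (Pi.single b 1) (Pi.single a 1)
  have hsingle : ∀ c d : ι, star (Pi.single c (1:ℂ)) ⬝ᵥ M *ᵥ Pi.single d 1 = M c d := by
    intro c d
    simp [← Pi.single_star, single_dotProduct]
  rw [hsingle, hsingle] at hk
  simpa [Matrix.conjTranspose_apply] using hk.symm

lemma psd_diag {ι : Type} [Fintype ι] [DecidableEq ι] {M : Matrix ι ι ℂ}
    (hM : M.PosSemidef) (a : ι) : 0 ≤ M a a := by
  have := hM.dotProduct_mulVec_nonneg (Pi.single a 1)
  simpa [← Pi.single_star, single_dotProduct] using this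

lemma psd_trace_nonneg {ι : Type} [Fintype ι] [DecidableEq ι] {M : Matrix ι ι ℂ}
    (hM : M.PosSemidef) : 0 ≤ M.trace :=
  Finset.sum_nonneg fun i _ => psd_diag hM i

lemma psd_mul_trace_nonneg {ι : Type} [Fintype ι] [DecidableEq ι] {A B : Matrix ι ι ℂ}
    (hA : A.PosSemidef) (hB : B.PosSemidef) : 0 ≤ (A * B).trace := by
  open scoped MatrixOrder in
  obtain ⟨C, hC⟩ := CStarAlgebra.nonneg_iff_eq_star_mul_self.mp hA.nonneg
  have hpsd := hB.conjTranspose_mul_mul_same Cᴴ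
  rw [Matrix.conjTranspose_conjTranspose] at hpsd
  have h1 : (A * B).trace = (C * B * Cᴴ).trace := by
    rw [hC, Matrix.star_eq_conjTranspose, Matrix.mul_assoc, Matrix.trace_mul_comm, Matrix.mul_assoc]
  rw [h1]
  exact psd_trace_nonneg hpsd

lemma psd_outer {ι : Type} [Fintype ι] [DecidableEq ι] (x : ι → ℂ) :
    (Matrix.vecMulVec x (star x)).PosSemidef := by
  apply psd_of_form
  intro v
  have : star v ⬝ᵥ (Matrix.vecMulVec x (star x)) *ᵥ v
      = (star v ⬝ᵥ x) * star (star v ⬝ᵥ x) := by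
    simp [Matrix.vecMulVec, dotProduct, Matrix.mulVec, Finset.mul_sum, Finset.sum_mul,
      star_sum, mul_comm, mul_assoc, mul_left_comm]
    rw [Finset.sum_comm]
  rw [this]
  exact mul_star_self_nonneg _


lemma psd_entry_bound {ι : Type} [Fintype ι] [DecidableEq ι] {P : Matrix ι ι ℂ}
    (hP : P.PosSemidef) (a b : ι) :
    ‖P a b‖ ≤ (P a a).re + (P b b).re := by
  have hda := psd_diag hP a
  have hdb := psd_diag hP b
  rw [Complex.le_def] at hda hdb
  simp only [Complex.zero_re, Complex.zero_im] at hda hdb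
  by_cases hz : P a b = 0
  · simp only [hz, norm_zero]
    linarith [hda.1, hdb.1]
  · set z := P a b with hzdef
    set r := ‖z‖ with hrdef
    have hr : 0 < r := by
      rw [hrdef]
      exact (norm_pos_iff.mpr hz)
    set c : ℂ := -z / (r : ℂ) with hcdef
    have hba : P b a = (starRingEnd ℂ) z := by
      rw [hzdef]
      nth_rewrite 1 [← hP.1.eq]
      simp [Matrix.conjTranspose_apply]
    have hexp : star (Pi.single a c + Pi.single b 1) ⬝ᵥ P *ᵥ (Pi.single a c + Pi.single b 1)
        = P a a * ((starRingEnd ℂ) c * c) + (starRingEnd ℂ) c * z + c * (starRingEnd ℂ) z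
          + P b b := by
      simp [star_add, ← Pi.single_star, add_dotProduct, Matrix.mulVec_add,
        single_dotProduct, hba]
      ring
    have hq := hP.dotProduct_mulVec_nonneg (Pi.single a c + Pi.single b 1)
    rw [hexp] at hq
    have hrne : (r : ℂ) ≠ 0 := by
      exact_mod_cast hr.ne'
    have hnsq : (starRingEnd ℂ) z * z = ((r : ℝ) : ℂ) * ((r : ℝ) : ℂ) := by
      rw [mul_comm, Complex.mul_conj]
      rw [Complex.normSq_eq_norm_sq, ← hrdef]
      push_cast
      ring
    have h1 : (starRingEnd ℂ) c * c = 1 := by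
      rw [hcdef]
      rw [map_div₀, map_neg, Complex.conj_ofReal]
      field_simp
      rw [hnsq]
      ring
    have h2 : (starRingEnd ℂ) c * z = -(r : ℂ) := by
      rw [hcdef, map_div₀, map_neg, Complex.conj_ofReal]
      field_simp
      rw [hnsq]
      ring
    have h3 : c * (starRingEnd ℂ) z = -(r : ℂ) := by
      rw [hcdef]
      field_simp
      rw [mul_comm z _, hnsq]
      ring
    rw [h1, h2, h3, mul_one] at hq
    rw [Complex.le_def] at hq
    simp only [Complex.add_re, Complex.neg_re, Complex.ofReal_re, Complex.zero_re] at hq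
    have := hq.1
    linarith [this, hr]





noncomputable def dualMap {s t : ℕ}
    (E : Matrix (Fin s) (Fin s) ℂ →ₗ[ℂ] Matrix (Fin t) (Fin t) ℂ) :
    Matrix (Fin t) (Fin t) ℂ →ₗ[ℂ] Matrix (Fin s) (Fin s) ℂ where
  toFun Y := Matrix.of fun a b => (E (Matrix.single b a 1) * Y).trace
  map_add' Y Z := by
    ext a b
    simp [Matrix.mul_add]
  map_smul' c Y := by
    ext a b
    simp [Matrix.mul_smul]

lemma expand_trace {α : Type} [Fintype α] (A B : Matrix α α ℂ) :
    (A * B).trace = ∑ p, ∑ q, A p q * B q p := by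
  simp [Matrix.trace, Matrix.diag, Matrix.mul_apply]

lemma trace_dual {s t : ℕ}
    (E : Matrix (Fin s) (Fin s) ℂ →ₗ[ℂ] Matrix (Fin t) (Fin t) ℂ)
    (X : Matrix (Fin s) (Fin s) ℂ) (Y : Matrix (Fin t) (Fin t) ℂ) :
    (E X * Y).trace = (X * dualMap E Y).trace := by
  have hX : X = ∑ a : Fin s, ∑ b : Fin s, X a b • Matrix.single a b 1 := by
    conv_lhs => rw [Matrix.matrix_eq_sum_single X]
    refine Finset.sum_congr rfl fun a _ => Finset.sum_congr rfl fun b _ => ?_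
    rw [Matrix.smul_single, smul_eq_mul, mul_one]
  conv_lhs => rw [hX]
  conv_rhs => rw [hX]
  simp only [map_sum, _root_.map_smul, Matrix.sum_mul, Matrix.smul_mul, Matrix.trace_sum,
    Matrix.trace_smul, smul_eq_mul]
  refine Finset.sum_congr rfl fun a _ => Finset.sum_congr rfl fun b _ => ?_
  congr 1
  have hstd : ∀ p q : Fin s, Matrix.single a b (1:ℂ) p q
      = if a = p ∧ b = q then 1 else 0 := fun p q => rfl
  conv_rhs => rw [expand_trace]
  simp only [hstd, ite_and, ite_mul, one_mul, zero_mul]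
  simp [Finset.sum_ite_eq, dualMap]

lemma dualMap_one {s t : ℕ}
    (E : Matrix (Fin s) (Fin s) ℂ →ₗ[ℂ] Matrix (Fin t) (Fin t) ℂ)
    (htp : TracePreserving E) : dualMap E (1 : Matrix (Fin t) (Fin t) ℂ) = 1 := by
  ext a b
  show (E (Matrix.single b a 1) * 1).trace = (1 : Matrix (Fin s) (Fin s) ℂ) a b
  rw [Matrix.mul_one, htp]
  simp [Matrix.trace, Matrix.diag, Matrix.single, Matrix.one_apply, ite_and,
    Finset.sum_ite_eq, eq_comm]

lemma outer_trace_form {ι : Type} [Fintype ι] [DecidableEq ι]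
    (Z : Matrix ι ι ℂ) (x : ι → ℂ) :
    star x ⬝ᵥ Z *ᵥ x = (Z * Matrix.vecMulVec x (star x)).trace := by
  rw [expand_trace]
  simp [Matrix.vecMulVec, dotProduct, Matrix.mulVec, Finset.mul_sum, Finset.sum_mul]
  refine Finset.sum_congr rfl fun p _ => Finset.sum_congr rfl fun q _ => ?_
  ring

lemma dualMap_psd {s t : ℕ}
    (E : Matrix (Fin s) (Fin s) ℂ →ₗ[ℂ] Matrix (Fin t) (Fin t) ℂ)
    (hpos : ∀ X : Matrix (Fin s) (Fin s) ℂ, X.PosSemidef → (E X).PosSemidef)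
    {Y : Matrix (Fin t) (Fin t) ℂ} (hY : Y.PosSemidef) : (dualMap E Y).PosSemidef := by
  apply psd_of_form
  intro x
  rw [outer_trace_form, Matrix.trace_mul_comm, ← trace_dual]
  exact psd_mul_trace_nonneg (hpos _ (psd_outer x)) hY





lemma matLift_trace {n s t : ℕ}
    (E : Matrix (Fin s) (Fin s) ℂ →ₗ[ℂ] Matrix (Fin t) (Fin t) ℂ)
    (Φ : Matrix (Fin n × Fin s) (Fin n × Fin s) ℂ)
    (M : Matrix (Fin n) (Fin n) ℂ) (D : Matrix (Fin t) (Fin t) ℂ) :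
    (matLift n E Φ * (M ⊗ₖ D)).trace = (Φ * (M ⊗ₖ dualMap E D)).trace := by
  have step1 : (matLift n E Φ * (M ⊗ₖ D)).trace
      = ∑ p1 : Fin n, ∑ q1 : Fin n, M q1 p1 *
          (E (Matrix.of fun σ σ' => Φ (p1, σ) (q1, σ')) * D).trace := by
    rw [expand_trace]
    simp only [Fintype.sum_prod_type]
    refine Finset.sum_congr rfl fun p1 _ => ?_
    have hcomm : ∀ (F : Fin t → Fin n → ℂ), (∑ p2, ∑ q1, F p2 q1) = ∑ q1, ∑ p2, F p2 q1 :=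
      fun F => Finset.sum_comm
    rw [hcomm (fun p2 q1 => ∑ q2,
      matLift n E Φ (p1, p2) (q1, q2) * (M ⊗ₖ D) (q1, q2) (p1, p2))]
    refine Finset.sum_congr rfl fun q1 _ => ?_
    rw [expand_trace, Finset.mul_sum]
    refine Finset.sum_congr rfl fun p2 _ => ?_
    rw [Finset.mul_sum]
    refine Finset.sum_congr rfl fun q2 _ => ?_
    simp [matLift, Matrix.kroneckerMap_apply]
    ring
  have step2 : (Φ * (M ⊗ₖ dualMap E D)).trace
      = ∑ p1 : Fin n, ∑ q1 : Fin n, M q1 p1 *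
          ((Matrix.of fun σ σ' => Φ (p1, σ) (q1, σ')) * dualMap E D).trace := by
    rw [expand_trace]
    simp only [Fintype.sum_prod_type]
    refine Finset.sum_congr rfl fun p1 _ => ?_
    have hcomm : ∀ (F : Fin s → Fin n → ℂ), (∑ σ, ∑ q1, F σ q1) = ∑ q1, ∑ σ, F σ q1 :=
      fun F => Finset.sum_comm
    rw [hcomm (fun σ q1 => ∑ σ',
      Φ (p1, σ) (q1, σ') * (M ⊗ₖ dualMap E D) (q1, σ') (p1, σ))]
    refine Finset.sum_congr rfl fun q1 _ => ?_
    rw [expand_trace, Finset.mul_sum]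
    refine Finset.sum_congr rfl fun σ _ => ?_
    rw [Finset.mul_sum]
    refine Finset.sum_congr rfl fun σ' _ => ?_
    simp [Matrix.kroneckerMap_apply]
    ring
  rw [step1, step2]
  refine Finset.sum_congr rfl fun p1 _ => Finset.sum_congr rfl fun q1 _ => ?_
  rw [trace_dual]

/-- If `Ψ = (id_N ⊗ E)(Φ)` for a positive (not necessarily completely positive)
trace-preserving map `E`, then every trivial-environment game has value over `Ψ`
at most its value over `Φ`. -/
theorem positive_map_trivial_environment (n s t : ℕ)
    (Φ : Matrix (Fin n × Fin s) (Fin n × Fin s) ℂ)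
    (Ψ : Matrix (Fin n × Fin t) (Fin n × Fin t) ℂ)
    (hΦ : IsDensity Φ) (hΨ : IsDensity Ψ)
    (E : Matrix (Fin s) (Fin s) ℂ →ₗ[ℂ] Matrix (Fin t) (Fin t) ℂ)
    (hpos : PositiveMap E) (htp : TracePreserving E)
    (hsim : Ψ = matLift n E Φ) :
    ∀ (k : ℕ) (M : Fin k → Matrix (Fin n) (Fin n) ℂ),
      (∀ i, (M i).IsHermitian) → RvalTriv Ψ M ≤ RvalTriv Φ M := by
  intro k M hM
  unfold RvalTriv
  cases k with
  | zero =>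
    refine le_trans (Real.sSup_le ?_ le_rfl) (Real.sSup_nonneg ?_)
    · rintro r ⟨D, hD, rfl⟩
      simp
    · rintro r ⟨D, hD, rfl⟩
      simp
  | succ k =>
    apply csSup_le_csSup
    · -- BddAbove of the Φ-set
      refine ⟨∑ i, ∑ p : Fin n × Fin s, ∑ q : Fin n × Fin s,
        ‖Φ p q‖ * (‖M i q.1 p.1‖ * 2), ?_⟩
      rintro r ⟨D, hD, rfl⟩
      have hdiag0 : ∀ (j : Fin (k+1)) (a : Fin s), 0 ≤ (D j a a).re ∧ (D j a a).im = 0 := by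
        intro j a
        have := psd_diag (hD.1 j) a
        rw [Complex.le_def] at this
        simp only [Complex.zero_re, Complex.zero_im] at this
        exact ⟨this.1, this.2.symm⟩
      have hdiagle : ∀ (j : Fin (k+1)) (a : Fin s), (D j a a).re ≤ 1 := by
        intro j a
        have hsum : ∑ i, (D i a a).re = 1 := by
          have h1 := congrFun (congrFun hD.2 (a := (a : Fin s))) a
          have h2 : (∑ i, D i) a a = ∑ i, D i a a := by
            simp [Matrix.sum_apply]
          rw [h2] at h1
          have := congrArg Complex.re h1
          rw [Complex.re_sum] at this
          simpa [Matrix.one_apply] using this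
        rw [← hsum]
        exact Finset.single_le_sum (fun i _ => (hdiag0 i a).1) (Finset.mem_univ j)
      have hDbound : ∀ (j : Fin (k+1)) (a b : Fin s), ‖D j a b‖ ≤ 2 := by
        intro j a b
        calc ‖D j a b‖ ≤ (D j a a).re + (D j b b).re :=
              psd_entry_bound (hD.1 j) a b
          _ ≤ 2 := by linarith [hdiagle j a, hdiagle j b]
      refine Finset.sum_le_sum fun i _ => ?_
      rw [expand_trace, Complex.re_sum]
      refine Finset.sum_le_sum fun p _ => ?_
      rw [Complex.re_sum]
      refine Finset.sum_le_sum fun q _ => ?_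
      calc (Φ p q * (M i ⊗ₖ D i) q p).re
          ≤ ‖Φ p q * (M i ⊗ₖ D i) q p‖ := Complex.re_le_norm _
        _ = ‖Φ p q‖ * (‖M i q.1 p.1‖ * ‖D i q.2 p.2‖) := by
            rw [norm_mul]
            congr 1
            rw [Matrix.kroneckerMap_apply, norm_mul]
        _ ≤ ‖Φ p q‖ * (‖M i q.1 p.1‖ * 2) := by
            gcongr
            exact hDbound i q.2 p.2
    · -- the Ψ-set is nonempty
      refine ⟨∑ i, ((Ψ * (M i ⊗ₖ (if i = 0 then (1 : Matrix (Fin t) (Fin t) ℂ) else 0))).trace).re,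
        fun i => if i = 0 then (1 : Matrix (Fin t) (Fin t) ℂ) else 0, ⟨?_, ?_⟩, rfl⟩
      · intro i
        by_cases h : i = 0 <;> simp [h, Matrix.PosSemidef.one, Matrix.PosSemidef.zero]
      · simp [Finset.sum_ite_eq']
    · -- inclusion via the dual map
      rintro r ⟨D, hD, rfl⟩
      refine ⟨fun i => dualMap E (D i), ⟨fun i => dualMap_psd E hpos (hD.1 i), ?_⟩, ?_⟩
      · rw [← map_sum, hD.2, dualMap_one E htp]
      · refine Finset.sum_congr rfl fun i _ => ?_
        rw [hsim, matLift_trace]
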